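/- Let (X,d) be a metric space and let u ∈ F_USCG(X). Then P_0(u) = P(u), and P(u) is at most countable. -/

import Mathlib

open Set Filter Metric Topology MeasureTheory

/-- The α-cut of a fuzzy set `u : X → ℝ`: for `α ≠ 0` it is `{x | u x ≥ α}`,
and for `α = 0` it is the closure of `{x | u x > 0}`. -/
noncomputable def cut {X : Type*} [MetricSpace X] (u : X → ℝ) (α : ℝ) : Set X :=
  if α = 0 then closure {x | 0 < u x} else {x | α ≤ u x}

/-- `u` is a normal upper semicontinuous fuzzy set: it takes values in `[0,1]` and
all α-cuts (`α ∈ [0,1]`) are nonempty and closed. -/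
def FUSC {X : Type*} [MetricSpace X] (u : X → ℝ) : Prop :=
  (∀ x, u x ∈ Set.Icc (0:ℝ) 1) ∧
    ∀ α ∈ Set.Icc (0:ℝ) 1, (cut u α).Nonempty ∧ IsClosed (cut u α)

/-- `F_USCG(X)`: fuzzy sets in `F_USC(X)` with compact positive α-cuts. -/
def FUSCG {X : Type*} [MetricSpace X] (u : X → ℝ) : Prop :=
  FUSC u ∧ ∀ α ∈ Set.Ioc (0:ℝ) 1, IsCompact (cut u α)

/-- `F_USCB(X)`: fuzzy sets in `F_USC(X)` with compact support. -/
def FUSCB {X : Type*} [MetricSpace X] (u : X → ℝ) : Prop :=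
  FUSC u ∧ IsCompact (cut u 0)

/-- Kuratowski lower limit of a sequence of sets. -/
def kurLiminf {Y : Type*} [MetricSpace Y] (C : ℕ → Set Y) : Set Y :=
  {y | ∃ f : ℕ → Y, (∀ n, f n ∈ C n) ∧ Tendsto f atTop (𝓝 y)}

/-- Kuratowski upper limit of a sequence of sets. -/
def kurLimsup {Y : Type*} [MetricSpace Y] (C : ℕ → Set Y) : Set Y :=
  {y | ∃ φ : ℕ → ℕ, StrictMono φ ∧
        ∃ f : ℕ → Y, (∀ n, f n ∈ C (φ n)) ∧ Tendsto f atTop (𝓝 y)}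

/-- Kuratowski convergence of a sequence of sets to a set. -/
def KurConv {Y : Type*} [MetricSpace Y] (C : ℕ → Set Y) (D : Set Y) : Prop :=
  kurLiminf C = D ∧ kurLimsup C = D

/-- The endograph of `u`: `{(x,t) ∈ X × [0,1] : u x ≥ t}`. -/
def endo {X : Type*} [MetricSpace X] (u : X → ℝ) : Set (X × ℝ) :=
  {p | p.2 ∈ Set.Icc (0:ℝ) 1 ∧ p.2 ≤ u p.1}

/-- The sendograph of `u`: `end u ∩ ([u]₀ × [0,1])`. -/
noncomputable def sendo {X : Type*} [MetricSpace X] (u : X → ℝ) : Set (X × ℝ) :=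
  endo u ∩ (cut u 0) ×ˢ (Set.Icc (0:ℝ) 1)

/-- Γ-convergence: Kuratowski convergence of endographs. -/
def GammaConv {X : Type*} [MetricSpace X] (un : ℕ → X → ℝ) (u : X → ℝ) : Prop :=
  KurConv (fun n => endo (un n)) (endo u)

/-- The endograph metric. -/
noncomputable def Hend {X : Type*} [MetricSpace X] (u v : X → ℝ) : ℝ :=
  hausdorffDist (endo u) (endo v)

/-- The sendograph metric. -/
noncomputable def Hsend {X : Type*} [MetricSpace X] (u v : X → ℝ) : ℝ :=
  hausdorffDist (sendo u) (sendo v)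

/-- The set of platform points of `u`:
`α ∈ (0,1)` with `closure {u > α}` a proper subset of `[u]_α`. -/
def Pset {X : Type*} [MetricSpace X] (u : X → ℝ) : Set ℝ :=
  {α | α ∈ Set.Ioo (0:ℝ) 1 ∧ closure {x | α < u x} ⊂ cut u α}

/-- `P₀(u)`: the set of `α ∈ (0,1)` such that `H([u]_β, [u]_α)` does not tend to `0`
as `β → α`. -/
def P0set {X : Type*} [MetricSpace X] (u : X → ℝ) : Set ℝ :=
  {α | α ∈ Set.Ioo (0:ℝ) 1 ∧
    ¬ Tendsto (fun β => hausdorffDist (cut u β) (cut u α)) (𝓝[≠] α) (𝓝 0)}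


section Helpers
variable {X : Type*} [MetricSpace X]

lemma mem_cut_pos {u : X → ℝ} {α : ℝ} (hα : α ≠ 0) {x : X} : x ∈ cut u α ↔ α ≤ u x := by
  unfold cut; rw [if_neg hα]; rfl

lemma cut_anti (u : X → ℝ) {α β : ℝ} (hα : α ≠ 0) (hβ : β ≠ 0) (h : α ≤ β) :
    cut u β ⊆ cut u α := fun x hx =>
  (mem_cut_pos hα).2 (le_trans h ((mem_cut_pos hβ).1 hx))

lemma closure_gt_subset_cut (u : X → ℝ) {α : ℝ} (hα : 0 < α) (hα1 : α ≤ 1) (hu : FUSC u) :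
    closure {x | α < u x} ⊆ cut u α := by
  refine closure_minimal ?_ (hu.2 α ⟨hα.le, hα1⟩).2
  intro x hx
  exact (mem_cut_pos hα.ne').2 (le_of_lt hx)

lemma finite_of_separated {A : Set ℝ} (g : ℝ → X) {K : Set X} (hK : IsCompact K)
    (hg : ∀ α ∈ A, g α ∈ K) {r : ℝ} (hr : 0 < r)
    (hsep : ∀ α ∈ A, ∀ β ∈ A, α ≠ β → r ≤ dist (g α) (g β)) : A.Finite := by
  obtain ⟨t, htf, htc⟩ := totallyBounded_iff.1 hK.totallyBounded (r/2) (by linarith)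
  have hsub : A ⊆ ⋃ y ∈ t, {α ∈ A | g α ∈ ball y (r/2)} := by
    intro α hα
    obtain ⟨y, hy, hyb⟩ := mem_iUnion₂.1 (htc (hg α hα))
    exact mem_iUnion₂.2 ⟨y, hy, hα, hyb⟩
  refine Set.Finite.subset (Set.Finite.biUnion htf fun y _ => ?_) hsub
  apply Set.Subsingleton.finite
  intro a ha b hb
  by_contra hne
  have h1 := hsep a ha.1 b hb.1 hne
  have h2 : dist (g a) (g b) < r := by
    calc dist (g a) (g b) ≤ dist (g a) y + dist y (g b) := dist_triangle _ _ _
    _ < r/2 + r/2 := add_lt_add (mem_ball.1 ha.2) (by rw [dist_comm]; exact mem_ball.1 hb.2)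
    _ = r := by ring
  linarith

end Helpers

section Main
variable {X : Type*} [MetricSpace X]

lemma tendsto_of_not_platform {u : X → ℝ} (hu : FUSCG u) {α : ℝ} (hα : α ∈ Set.Ioo (0:ℝ) 1)
    (heq : closure {x | α < u x} = cut u α) :
    Tendsto (fun β => hausdorffDist (cut u β) (cut u α)) (𝓝[≠] α) (𝓝 0) := by
  obtain ⟨hα0, hα1⟩ := hα
  have hαne : α ≠ 0 := hα0.ne'
  have hcutα : IsCompact (cut u α) := hu.2 α ⟨hα0, hα1.le⟩
  have hne : (cut u α).Nonempty := (hu.1.2 α ⟨hα0.le, hα1.le⟩).1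
  rw [Metric.tendsto_nhds]
  intro ε hε
  -- RIGHT side: finite subcover by balls centered in {u > α}
  have hcover : cut u α ⊆ ⋃ y ∈ {x | α < u x}, ball y (ε/2) := by
    intro x hx
    rw [← heq] at hx
    obtain ⟨y, hy, hyd⟩ := Metric.mem_closure_iff.1 hx (ε/2) (by linarith)
    exact mem_iUnion₂.2 ⟨y, hy, by simpa [mem_ball, dist_comm] using hyd⟩
  obtain ⟨T, hTsub, hTfin, hTcov⟩ := hcutα.elim_finite_subcover_image
    (fun y _ => isOpen_ball) hcover
  have hTne : T.Nonempty := by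
    obtain ⟨x, hx⟩ := hne
    obtain ⟨y, hy, _⟩ := mem_iUnion₂.1 (hTcov hx)
    exact ⟨y, hy⟩
  have hFne : hTfin.toFinset.Nonempty := by
    rwa [Set.Finite.toFinset_nonempty]
  set β₁ := hTfin.toFinset.inf' hFne u with hβ₁def
  have hβ₁ : α < β₁ := by
    rw [hβ₁def, Finset.lt_inf'_iff]
    intro y hy
    exact hTsub (hTfin.mem_toFinset.1 hy)
  -- LEFT side: nested compact sets
  set γ : ℕ → ℝ := fun n => α - α / 2 * (1 / (n + 1)) with hγdef
  have hγpos : ∀ n : ℕ, 0 < γ n := by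
    intro n
    have h1 : (1:ℝ) / (n + 1) ≤ 1 := by
      rw [div_le_one (by positivity)]
      have : (0:ℝ) ≤ n := Nat.cast_nonneg n
      linarith
    have : α / 2 * (1 / (n + 1)) ≤ α / 2 * 1 := by
      apply mul_le_mul_of_nonneg_left h1 (by linarith)
    simp only [hγdef]
    nlinarith
  have hγlt : ∀ n : ℕ, γ n < α := by
    intro n
    have : (0:ℝ) < α / 2 * (1 / (n + 1)) := by positivity
    simp only [hγdef]
    linarith
  have hγmono : ∀ n : ℕ, γ n ≤ γ (n + 1) := by
    intro n
    simp only [hγdef]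
    have h1 : (1:ℝ) / (↑n + 1 + 1) ≤ 1 / (↑n + 1) := by
      apply one_div_le_one_div_of_le (by positivity)
      linarith
    have h2 := mul_le_mul_of_nonneg_left h1 (by linarith : (0:ℝ) ≤ α / 2)
    push_cast
    linarith
  have hγtendsto : Tendsto γ atTop (𝓝 α) := by
    have h0 : Tendsto (fun n : ℕ => α / 2 * (1 / ((n:ℝ) + 1))) atTop (𝓝 0) := by
      have := tendsto_one_div_add_atTop_nhds_zero_nat (𝕜 := ℝ)
      simpa using this.const_mul (α / 2)
    have h1 : Tendsto (fun _ : ℕ => α) atTop (𝓝 α) := tendsto_const_nhds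
    rw [hγdef]
    simpa [one_div] using h1.sub h0
  set V : ℕ → Set X := fun n => cut u (γ n) ∩ (thickening (ε/2) (cut u α))ᶜ with hVdef
  have hVsome : ∃ n, V n = ∅ := by
    by_contra hc
    push_neg at hc
    have hVne : ∀ n, (V n).Nonempty := fun n => hc n
    have hVclosed : ∀ n, IsClosed (V n) := fun n =>
      ((hu.1.2 (γ n) ⟨(hγpos n).le, (hγlt n).le.trans hα1.le⟩).2).inter
        isOpen_thickening.isClosed_compl
    have hVsub : ∀ n, V (n+1) ⊆ V n := fun n =>
      inter_subset_inter_left _ (cut_anti u (hγpos n).ne' (hγpos (n+1)).ne' (hγmono n))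
    have hV0 : IsCompact (V 0) :=
      (hu.2 (γ 0) ⟨hγpos 0, (hγlt 0).le.trans hα1.le⟩).inter_right
        isOpen_thickening.isClosed_compl
    obtain ⟨x, hx⟩ :=
      IsCompact.nonempty_iInter_of_sequence_nonempty_isCompact_isClosed V hVsub hVne hV0 hVclosed
    have hxα : x ∈ cut u α := by
      rw [mem_cut_pos hαne]
      have hall : ∀ n, γ n ≤ u x := fun n =>
        (mem_cut_pos (hγpos n).ne').1 (mem_iInter.1 hx n).1
      exact le_of_tendsto hγtendsto (Eventually.of_forall hall)
    exact (mem_iInter.1 hx 0).2 (self_subset_thickening (by linarith) _ hxα)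
  obtain ⟨n₀, hn₀⟩ := hVsome
  have hmem : Set.Ioo (γ n₀) β₁ ∈ 𝓝[≠] α :=
    nhdsWithin_le_nhds (Ioo_mem_nhds (hγlt n₀) hβ₁)
  filter_upwards [hmem] with β hβ
  have hβpos : 0 < β := lt_trans (hγpos n₀) hβ.1
  have hle : hausdorffDist (cut u β) (cut u α) ≤ ε/2 := by
    rcases le_or_gt β α with hcase | hcase
    · apply hausdorffDist_le_of_mem_dist (by linarith)
      · intro x hx
        have hx' : x ∈ cut u (γ n₀) := cut_anti u (hγpos n₀).ne' hβpos.ne' hβ.1.le hx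
        have hth : x ∈ thickening (ε/2) (cut u α) := by
          by_contra hcth
          have hmemV : x ∈ V n₀ := ⟨hx', hcth⟩
          rw [hn₀] at hmemV
          exact hmemV
        obtain ⟨z, hz, hzd⟩ := mem_thickening_iff.1 hth
        exact ⟨z, hz, hzd.le⟩
      · intro x hx
        exact ⟨x, cut_anti u hβpos.ne' hαne hcase hx, by rw [dist_self]; positivity⟩
    · apply hausdorffDist_le_of_mem_dist (by linarith)
      · intro x hx
        exact ⟨x, cut_anti u hαne hβpos.ne' hcase.le hx, by rw [dist_self]; positivity⟩
      · intro x hx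
        obtain ⟨y, hyT, hyb⟩ := mem_iUnion₂.1 (hTcov hx)
        refine ⟨y, ?_, (mem_ball.1 hyb).le⟩
        rw [mem_cut_pos hβpos.ne']
        have hβ₁y : β₁ ≤ u y := Finset.inf'_le u (hTfin.mem_toFinset.2 hyT)
        linarith [hβ.2]
  rw [Real.dist_eq, sub_zero, abs_of_nonneg hausdorffDist_nonneg]
  linarith


lemma not_tendsto_of_platform {u : X → ℝ} (hu : FUSCG u) {α : ℝ} (hα : α ∈ Set.Ioo (0:ℝ) 1)
    (hss : closure {x | α < u x} ⊂ cut u α) :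
    ¬ Tendsto (fun β => hausdorffDist (cut u β) (cut u α)) (𝓝[≠] α) (𝓝 0) := by
  obtain ⟨hα0, hα1⟩ := hα
  obtain ⟨x₀, hx₀c, hx₀n⟩ := Set.exists_of_ssubset hss
  obtain ⟨δ, hδ, hball⟩ := Metric.isOpen_iff.1 isClosed_closure.isOpen_compl x₀ hx₀n
  intro ht
  have hev : ∀ᶠ β in 𝓝[≠] α, hausdorffDist (cut u β) (cut u α) < δ := by
    filter_upwards [Metric.tendsto_nhds.1 ht δ hδ] with β hb
    rwa [Real.dist_eq, sub_zero, abs_of_nonneg hausdorffDist_nonneg] at hb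
  have hIoo : Set.Ioo α 1 ∈ 𝓝[>] α := Ioo_mem_nhdsGT_of_mem ⟨le_refl α, hα1⟩
  have hle : 𝓝[>] α ≤ 𝓝[≠] α := nhdsWithin_mono α (fun x hx => ne_of_gt hx)
  haveI := nhdsGT_neBot α
  have hIoo' : ∀ᶠ β in 𝓝[>] α, β ∈ Set.Ioo α 1 := hIoo
  obtain ⟨β, hβd, hβI⟩ := ((hev.filter_mono hle).and hIoo').exists
  have hβ0 : 0 < β := lt_trans hα0 hβI.1
  have hβne : (cut u β).Nonempty := (hu.1.2 β ⟨hβ0.le, hβI.2.le⟩).1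
  have hαne : (cut u α).Nonempty := (hu.1.2 α ⟨hα0.le, hα1.le⟩).1
  have hfin : EMetric.hausdorffEdist (cut u α) (cut u β) ≠ ⊤ :=
    hausdorffEdist_ne_top_of_nonempty_of_bounded hαne hβne
      (hu.2 α ⟨hα0, hα1.le⟩).isBounded (hu.2 β ⟨hβ0, hβI.2.le⟩).isBounded
  have h1 : δ ≤ infDist x₀ (cut u β) := by
    by_contra hc
    push_neg at hc
    obtain ⟨y, hy, hyd⟩ := (Metric.infDist_lt_iff hβne).1 hc
    have hycl : y ∈ closure {x | α < u x} :=
      subset_closure (lt_of_lt_of_le hβI.1 ((mem_cut_pos hβ0.ne').1 hy))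
    exact hball (mem_ball'.2 hyd) hycl
  have h2 : infDist x₀ (cut u β) ≤ hausdorffDist (cut u α) (cut u β) :=
    infDist_le_hausdorffDist_of_mem hx₀c hfin
  rw [hausdorffDist_comm] at h2
  linarith

lemma pset_countable {u : X → ℝ} (hu : FUSCG u) : (Pset u).Countable := by
  haveI : Nonempty X := ⟨((hu.1.2 1 ⟨zero_le_one, le_refl 1⟩).1).some⟩
  have hw : ∀ α ∈ Pset u, ∃ x, u x = α ∧ ∃ δ > 0, ∀ y, dist x y < δ → u y ≤ α := by
    intro α hα
    obtain ⟨⟨hα0, hα1⟩, hss⟩ := hα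
    obtain ⟨x₀, hx₀c, hx₀n⟩ := Set.exists_of_ssubset hss
    obtain ⟨δ, hδ, hball⟩ := Metric.isOpen_iff.1 isClosed_closure.isOpen_compl x₀ hx₀n
    refine ⟨x₀, ?_, δ, hδ, ?_⟩
    · have h1 : α ≤ u x₀ := (mem_cut_pos hα0.ne').1 hx₀c
      have h2 : ¬ α < u x₀ := fun h => hx₀n (subset_closure h)
      linarith [not_lt.1 h2]
    · intro y hy
      by_contra hc
      exact hball (mem_ball'.2 hy) (subset_closure (not_le.1 hc))
  set A : ℕ → ℕ → Set ℝ := fun n m =>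
    {α | α ∈ Pset u ∧ 1/((n:ℝ)+1) ≤ α ∧
      ∃ x, u x = α ∧ ∀ y, dist x y < 1/((m:ℝ)+1) → u y ≤ α} with hAdef
  have hfin : ∀ n m, (A n m).Finite := by
    intro n m
    have hnpos : (0:ℝ) < 1/((n:ℝ)+1) := by positivity
    have hmpos : (0:ℝ) < 1/((m:ℝ)+1) := by positivity
    have hn1 : 1/((n:ℝ)+1) ≤ 1 := by
      rw [div_le_one (by positivity)]
      have : (0:ℝ) ≤ n := Nat.cast_nonneg n
      linarith
    have hex : ∀ α ∈ A n m, ∃ x, u x = α ∧ ∀ y, dist x y < 1/((m:ℝ)+1) → u y ≤ α :=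
      fun α hα => hα.2.2
    choose! g hg1 hg2 using hex
    have hK : IsCompact (cut u (1/((n:ℝ)+1))) := hu.2 _ ⟨hnpos, hn1⟩
    apply finite_of_separated g hK ?_ hmpos ?_
    · intro α hα
      rw [mem_cut_pos hnpos.ne', hg1 α hα]
      exact hα.2.1
    · intro a ha b hb hab
      rcases hab.lt_or_gt with h | h
      · by_contra hc
        push_neg at hc
        have := hg2 a ha (g b) hc
        rw [hg1 b hb] at this
        linarith
      · by_contra hc
        push_neg at hc
        rw [dist_comm] at hc
        have := hg2 b hb (g a) hc
        rw [hg1 a ha] at this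
        linarith
  have hsub : Pset u ⊆ ⋃ n, ⋃ m, A n m := by
    intro α hα
    obtain ⟨x, hx, δ, hδ, hball⟩ := hw α hα
    obtain ⟨n, hn⟩ := exists_nat_one_div_lt hα.1.1
    obtain ⟨m, hm⟩ := exists_nat_one_div_lt hδ
    exact mem_iUnion.2 ⟨n, mem_iUnion.2 ⟨m, hα, hn.le, x, hx,
      fun y hy => hball y (hy.trans hm)⟩⟩
  exact Set.Countable.mono hsub
    (Set.countable_iUnion fun n => Set.countable_iUnion fun m => (hfin n m).countable)

end Main

theorem P0set_eq_Pset_and_countable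
    {X : Type*} [MetricSpace X] (u : X → ℝ) (hu : FUSCG u) :
    P0set u = Pset u ∧ (Pset u).Countable := by
  constructor
  · ext α
    simp only [P0set, Pset, Set.mem_setOf_eq]
    constructor
    · rintro ⟨hα, hnt⟩
      refine ⟨hα, ?_⟩
      by_contra hc
      have hsubs : closure {x | α < u x} ⊆ cut u α :=
        closure_gt_subset_cut u hα.1 hα.2.le hu.1
      have heq : closure {x | α < u x} = cut u α := by
        rcases hsubs.ssubset_or_eq with h | h
        · exact absurd h hc
        · exact h
      exact hnt (tendsto_of_not_platform hu hα heq)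
    · rintro ⟨hα, hss⟩
      exact ⟨hα, not_tendsto_of_platform hu hα hss⟩
  · exact pset_countable hu
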